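/- Let (K, ∂) be a differential field of characteristic 0 with algebraically closed field of constants C. If every homogeneous linear differential equation ∂Y = AY over K (A ∈ Mₙ(K), any n) has a fundamental matrix of solutions Z ∈ GLₙ(K), then K is algebraically closed. -/

import Mathlib

open scoped Matrix

open Polynomial
namespace PVAux
variable {K : Type*} [Field K]
noncomputable def mapδ (δ : K → K) (f : K[X]) : K[X] :=
  ∑ i ∈ f.support, Polynomial.C (δ (f.coeff i)) * Polynomial.X ^ i
theorem δzero (δ : K → K) (hadd : ∀ a b : K, δ (a + b) = δ a + δ b) : δ 0 = 0 := by
  have := hadd 0 0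
  simp at this
  linear_combination this

theorem δone (δ : K → K) (hmul : ∀ a b : K, δ (a * b) = a * δ b + b * δ a) : δ 1 = 0 := by
  have := hmul 1 1
  simp at this
  linear_combination this

theorem coeff_mapδ (δ : K → K) (hadd : ∀ a b : K, δ (a + b) = δ a + δ b) (f : K[X]) (k : ℕ) :
    (mapδ δ f).coeff k = δ (f.coeff k) := by
  rw [mapδ, Polynomial.finset_sum_coeff]
  simp only [Polynomial.coeff_C_mul, Polynomial.coeff_X_pow, mul_ite, mul_one, mul_zero]
  by_cases h : k ∈ f.support
  · rw [Finset.sum_eq_single k]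
    · simp
    · intro b _ hb
      exact if_neg fun e => hb e.symm
    · intro h'; exact absurd h h'
  · rw [Finset.sum_eq_zero fun b hb => if_neg fun e => h (by rw [e]; exact hb)]
    rw [Polynomial.notMem_support_iff.mp h, δzero δ hadd]

theorem mapδ_add (δ : K → K) (hadd : ∀ a b : K, δ (a + b) = δ a + δ b) (f g : K[X]) :
    mapδ δ (f + g) = mapδ δ f + mapδ δ g := by
  ext k
  simp [coeff_mapδ δ hadd, hadd]

theorem mapδ_C (δ : K → K) (hadd : ∀ a b : K, δ (a + b) = δ a + δ b) (a : K) :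
    mapδ δ (Polynomial.C a) = Polynomial.C (δ a) := by
  ext k
  rw [coeff_mapδ δ hadd]
  rcases eq_or_ne k 0 with rfl | hk
  · simp
  · simp [Polynomial.coeff_C, hk, δzero δ hadd]

theorem mapδ_mul (δ : K → K) (hadd : ∀ a b : K, δ (a + b) = δ a + δ b)
    (hmul : ∀ a b : K, δ (a * b) = a * δ b + b * δ a) (f g : K[X]) :
    mapδ δ (f * g) = f * mapδ δ g + g * mapδ δ f := by
  have hsum : ∀ {ι : Type} (s : Finset ι) (F : ι → K),
      δ (∑ i ∈ s, F i) = ∑ i ∈ s, δ (F i) := by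
    intro ι s F
    exact map_sum (AddMonoidHom.mk' δ hadd) F s
  ext k
  rw [Polynomial.coeff_add, coeff_mapδ δ hadd, Polynomial.coeff_mul, Polynomial.coeff_mul,
    Polynomial.coeff_mul, hsum]
  simp only [coeff_mapδ δ hadd]
  rw [← Finset.Nat.sum_antidiagonal_swap (f := fun p => g.coeff p.1 * δ (f.coeff p.2))]
  rw [← Finset.sum_add_distrib]
  refine Finset.sum_congr rfl fun p _ => ?_
  rw [hmul]
  simp

theorem mapδ_C_mul_X_pow (δ : K → K) (hadd : ∀ a b : K, δ (a + b) = δ a + δ b) (a : K) (n : ℕ) :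
    mapδ δ (Polynomial.C a * Polynomial.X ^ n) = Polynomial.C (δ a) * Polynomial.X ^ n := by
  ext k
  rw [coeff_mapδ δ hadd]
  simp only [Polynomial.coeff_C_mul, Polynomial.coeff_X_pow, mul_ite, mul_one, mul_zero]
  rcases eq_or_ne k n with rfl | hk
  · simp
  · simp [hk, Ne.symm hk, δzero δ hadd]

set_option linter.unusedSectionVars false
section adjoin
variable [CharZero K] (δ : K → K) (q : K[X]) [hirr : Fact (Irreducible q)]
noncomputable abbrev rt : AdjoinRoot q := AdjoinRoot.root q

/-- The value of the extended derivation at the root. -/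
noncomputable def rootDeriv : AdjoinRoot q :=
  - (aeval (rt q) (mapδ δ q)) / (aeval (rt q) (derivative q))

theorem q_ne_zero : q ≠ 0 := hirr.out.ne_zero

theorem mk_surj : Function.Surjective (AdjoinRoot.mk q) := AdjoinRoot.mk_surjective

theorem deriv_ne_zero : aeval (rt q) (derivative q) ≠ 0 := by
  rw [AdjoinRoot.aeval_eq, Ne, AdjoinRoot.mk_eq_zero]
  intro hdvd
  have hq0 : q ≠ 0 := q_ne_zero q
  have hd0 : derivative q ≠ 0 := by
    intro h
    have h1 : 0 < q.natDegree := hirr.out.natDegree_pos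
    have := Polynomial.natDegree_eq_zero_of_derivative_eq_zero h
    omega
  have := Polynomial.degree_derivative_lt hq0
  exact hd0 (Polynomial.eq_zero_of_dvd_of_degree_lt hdvd this)

theorem rootDeriv_spec :
    aeval (rt q) (mapδ δ q) + aeval (rt q) (derivative q) * rootDeriv δ q = 0 := by
  rw [rootDeriv, mul_comm, div_mul_cancel₀ _ (deriv_ne_zero q)]
  exact add_neg_cancel _

/-- Derivative on the polynomial level. -/
noncomputable def Dt (f : K[X]) : AdjoinRoot q :=
  aeval (rt q) (mapδ δ f) + aeval (rt q) (derivative f) * rootDeriv δ q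

/-- The extended derivation on `AdjoinRoot q`. -/
noncomputable def D (x : AdjoinRoot q) : AdjoinRoot q :=
  Dt δ q (Function.surjInv (mk_surj q) x)

variable (hadd : ∀ a b : K, δ (a + b) = δ a + δ b)
    (hmul : ∀ a b : K, δ (a * b) = a * δ b + b * δ a)
include hadd hmul

theorem Dt_add (f g : K[X]) :
    Dt δ q (f + g) = Dt δ q f + Dt δ q g := by
  simp only [Dt, mapδ_add δ hadd, derivative_add, map_add]
  ring

theorem Dt_eq_zero (f : K[X]) (hf : AdjoinRoot.mk q f = 0) : Dt δ q f = 0 := by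
  obtain ⟨h, rfl⟩ := AdjoinRoot.mk_eq_zero.mp hf
  have hq : aeval (rt q) q = 0 := by
    rw [AdjoinRoot.aeval_eq, AdjoinRoot.mk_self]
  simp only [Dt, mapδ_mul δ hadd hmul, derivative_mul, map_add, map_mul, hq, zero_mul, mul_zero,
    add_zero, zero_add]
  have := rootDeriv_spec δ q
  ring_nf
  linear_combination aeval (rt q) h * rootDeriv_spec δ q

theorem D_mk (f : K[X]) : D δ q (AdjoinRoot.mk q f) = Dt δ q f := by
  set g := Function.surjInv (mk_surj q) (AdjoinRoot.mk q f) with hg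
  have hmk : AdjoinRoot.mk q g = AdjoinRoot.mk q f :=
    Function.surjInv_eq (mk_surj q) _
  have h0 : AdjoinRoot.mk q (g - f) = 0 := by rw [map_sub, hmk, sub_self]
  have hz := Dt_eq_zero δ q hadd hmul (g - f) h0
  have hgf : Dt δ q g = Dt δ q (g - f) + Dt δ q f := by
    rw [← Dt_add δ q hadd hmul, sub_add_cancel]
  show Dt δ q g = Dt δ q f
  rw [hgf, hz, zero_add]

-- chunk 3 starts here
theorem D_add (x y : AdjoinRoot q) : D δ q (x + y) = D δ q x + D δ q y := by
  obtain ⟨f, rfl⟩ := mk_surj q x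
  obtain ⟨g, rfl⟩ := mk_surj q y
  rw [← map_add, D_mk δ q hadd hmul, D_mk δ q hadd hmul, D_mk δ q hadd hmul,
    Dt_add δ q hadd hmul]

theorem D_zero : D δ q 0 = 0 := by
  have := D_add δ q hadd hmul 0 0
  rw [add_zero] at this
  rwa [left_eq_add] at this

theorem D_mul (x y : AdjoinRoot q) :
    D δ q (x * y) = x * D δ q y + y * D δ q x := by
  obtain ⟨f, rfl⟩ := mk_surj q x
  obtain ⟨g, rfl⟩ := mk_surj q y
  rw [← map_mul, D_mk δ q hadd hmul, D_mk δ q hadd hmul, D_mk δ q hadd hmul]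
  simp only [Dt, mapδ_mul δ hadd hmul, derivative_mul, map_add, map_mul, AdjoinRoot.aeval_eq]
  ring

theorem D_algebraMap (a : K) :
    D δ q (algebraMap K (AdjoinRoot q) a) = algebraMap K (AdjoinRoot q) (δ a) := by
  have h : algebraMap K (AdjoinRoot q) a = AdjoinRoot.mk q (Polynomial.C a) := by
    rw [AdjoinRoot.algebraMap_eq, ← AdjoinRoot.mk_C]
  rw [h, D_mk δ q hadd hmul, Dt, mapδ_C δ hadd]
  simp [AdjoinRoot.algebraMap_eq]

theorem D_aeval (z : AdjoinRoot q) (f : K[X]) :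
    D δ q (aeval z f) =
      aeval z (mapδ δ f) + aeval z (derivative f) * D δ q z := by
  induction f using Polynomial.induction_on with
  | C a =>
      rw [aeval_C, D_algebraMap δ q hadd hmul, mapδ_C δ hadd]
      simp
  | add p r hp hr =>
      rw [map_add, D_add δ q hadd hmul, hp, hr, mapδ_add δ hadd, derivative_add,
        map_add, map_add]
      ring
  | monomial n a ih =>
      have e1 : aeval z (Polynomial.C a * Polynomial.X ^ (n + 1))
          = aeval z (Polynomial.C a * Polynomial.X ^ n) * z := by
        rw [map_mul, map_mul, map_pow, map_pow, aeval_X, pow_succ]; ring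
      rw [e1, D_mul δ q hadd hmul, ih, mapδ_C_mul_X_pow δ hadd, mapδ_C_mul_X_pow δ hadd,
        derivative_C_mul_X_pow, derivative_C_mul_X_pow]
      simp only [map_mul, map_pow, aeval_X, aeval_C, map_natCast]
      cases n with
      | zero => simp; ring
      | succ m =>
          simp only [Nat.add_sub_cancel, pow_succ]
          push_cast
          ring

theorem D_const_mem (hC : ∀ p : Polynomial K, 0 < p.degree → (∀ i, δ (p.coeff i) = 0) →
      ∃ x : K, δ x = 0 ∧ p.IsRoot x)
    (z : AdjoinRoot q) (hz : D δ q z = 0) :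
    ∃ c : K, z = algebraMap K (AdjoinRoot q) c := by
  haveI : Module.Finite K (AdjoinRoot q) := (AdjoinRoot.powerBasis (q_ne_zero q)).finite
  have hint : IsIntegral K z := IsIntegral.of_finite K z
  set m := minpoly K z with hm
  have hmon : m.Monic := minpoly.monic hint
  have haev : aeval z m = 0 := minpoly.aeval K z
  have hchain := D_aeval δ q hadd hmul z m
  rw [haev, D_zero δ q hadd hmul, hz, mul_zero, add_zero] at hchain
  -- mapδ δ m = 0
  have hmd : mapδ δ m = 0 := by
    by_contra hne
    have hle := minpoly.degree_le_of_ne_zero K z hne hchain.symm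
    have hlt : (mapδ δ m).degree < m.natDegree := by
      rw [Polynomial.degree_lt_iff_coeff_zero]
      intro j hj
      rw [coeff_mapδ δ hadd]
      rcases eq_or_lt_of_le hj with h | h
      · have : m.coeff j = 1 := by
          rw [← Nat.cast_inj (R := WithBot ℕ)] at h
          have : j = m.natDegree := by exact_mod_cast h.symm
          rw [this]; exact hmon.coeff_natDegree
        rw [this, δone δ hmul]
      · have hj' : m.natDegree < j := by exact_mod_cast h
        rw [Polynomial.coeff_eq_zero_of_natDegree_lt hj', δzero δ hadd]
    rw [Polynomial.degree_eq_natDegree hmon.ne_zero] at hle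
    exact absurd (lt_of_le_of_lt hle hlt) (lt_irrefl _)
  have hconst : ∀ i, δ (m.coeff i) = 0 := by
    intro i
    have := coeff_mapδ δ hadd m i
    rw [hmd] at this
    simpa using this.symm
  have hdegpos : 0 < m.degree := minpoly.degree_pos hint
  obtain ⟨x, hx0, hxr⟩ := hC m hdegpos hconst
  have hirr' : Irreducible m := minpoly.irreducible hint
  have hdeg1 : m.degree = 1 := Polynomial.degree_eq_one_of_irreducible_of_root hirr' hxr
  -- z = algebraMap of -(coeff 0)
  have hnd1 : m.natDegree = 1 := Polynomial.natDegree_eq_of_degree_eq_some hdeg1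
  have hxm : m = Polynomial.X + Polynomial.C (m.coeff 0) := by
    have := Polynomial.eq_X_add_C_of_natDegree_le_one (le_of_eq hnd1)
    rw [← hnd1, hmon.coeff_natDegree] at this
    simpa using this
  refine ⟨-(m.coeff 0), ?_⟩
  have : aeval z m = z + algebraMap K (AdjoinRoot q) (m.coeff 0) := by
    rw [hxm]; simp
  rw [this] at haev
  rw [map_neg]
  linear_combination haev

end adjoin

section mainsec
variable {K : Type*} [Field K] [CharZero K]

theorem natDegree_eq_one (δ : K → K)
    (hadd : ∀ a b : K, δ (a + b) = δ a + δ b)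
    (hmul : ∀ a b : K, δ (a * b) = a * δ b + b * δ a)
    (hC : ∀ p : Polynomial K, 0 < p.degree → (∀ i, δ (p.coeff i) = 0) →
      ∃ x : K, δ x = 0 ∧ p.IsRoot x)
    (hPV : ∀ (n : ℕ) (A : Matrix (Fin n) (Fin n) K),
      ∃ Z Zinv : Matrix (Fin n) (Fin n) K, Z.map δ = A * Z ∧ Z * Zinv = 1 ∧ Zinv * Z = 1)
    (q : K[X]) (hqirr : Irreducible q) : q.natDegree = 1 := by
  haveI : Fact (Irreducible q) := ⟨hqirr⟩
  by_contra hne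
  have h2 : 2 ≤ q.natDegree := by
    have := hqirr.natDegree_pos
    omega
  set n := q.natDegree with hn
  set pb := AdjoinRoot.powerBasis (q_ne_zero q) with hpb
  have hdim : pb.dim = n := rfl
  let B : Module.Basis (Fin n) K (AdjoinRoot q) := pb.basis
  let A : Matrix (Fin n) (Fin n) K := fun i j => B.repr (D δ q (B j)) i
  let i0 : Fin n := ⟨0, by omega⟩
  let i1 : Fin n := ⟨1, by omega⟩
  obtain ⟨Z, Zinv, hZ, hZZ, -⟩ := hPV n (-A)
  have hDB : ∀ j, D δ q (B j) = ∑ i, A i j • B i := fun j => (B.sum_repr _).symm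
  -- derivative of a K-combination of basis vectors
  have hDv : ∀ c : Fin n → K,
      D δ q (∑ j, c j • B j) = ∑ i, (δ (c i) + ∑ j, A i j * c j) • B i := by
    intro c
    have hmap : D δ q (∑ j, c j • B j) = ∑ j, D δ q (c j • B j) :=
      map_sum (AddMonoidHom.mk' (D δ q) (D_add δ q hadd hmul)) _ _
    have h1 : D δ q (∑ j, c j • B j) = ∑ j, (c j • D δ q (B j) + δ (c j) • B j) := by
      rw [hmap]
      refine Finset.sum_congr rfl fun j _ => ?_
      rw [Algebra.smul_def, D_mul δ q hadd hmul, Algebra.smul_def, Algebra.smul_def,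
        D_algebraMap δ q hadd hmul]
      ring
    rw [h1, Finset.sum_add_distrib]
    simp only [hDB, Finset.smul_sum, smul_smul]
    rw [Finset.sum_comm]
    rw [← Finset.sum_add_distrib]
    refine Finset.sum_congr rfl fun i _ => ?_
    rw [add_smul, Finset.sum_smul, add_comm]
    congr 1
    refine Finset.sum_congr rfl fun j _ => ?_
    rw [mul_comm]
  -- the columns of Z give constants
  have hyD : ∀ k, D δ q (∑ j, Z j k • B j) = 0 := by
    intro k
    rw [hDv]
    have hentry : ∀ i, δ (Z i k) + ∑ j, A i j * Z j k = 0 := by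
      intro i
      have hik := congrFun (congrFun hZ i) k
      rw [Matrix.map_apply, Matrix.mul_apply] at hik
      simp only [Matrix.neg_apply, neg_mul] at hik
      rw [hik, ← Finset.sum_add_distrib]
      simp
    simp only [hentry]
    simp
  -- each column is a constant, hence lies in K·1
  have hcol : ∀ k j, j ≠ i0 → Z j k = 0 := by
    intro k j hj
    obtain ⟨c, hc⟩ := D_const_mem δ q hadd hmul hC _ (hyD k)
    have hrepr : (⇑(B.repr (∑ j, Z j k • B j)) : Fin n → K) = fun j => Z j k :=
      B.repr_sum_self _
    have h1 : (1 : AdjoinRoot q) = B i0 := by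
      have h := pb.basis_eq_pow i0
      have h0 : ((i0 : Fin n) : ℕ) = 0 := rfl
      rw [h0, pow_zero] at h
      exact h.symm
    have hc' : (∑ j, Z j k • B j) = c • B i0 := by
      rw [hc, Algebra.algebraMap_eq_smul_one, h1]
    have heq : (fun j => Z j k : Fin n → K) = ⇑(B.repr (c • B i0)) := by
      rw [← hrepr, hc']
    have hj' := congrFun heq j
    rw [map_smul, Module.Basis.repr_self] at hj'
    simpa [Finsupp.single_apply, Ne.symm hj] using hj'
  -- contradiction with invertibility of Z
  have hone : i1 ≠ i0 := by
    intro h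
    have := congrArg Fin.val h
    simp [i0, i1] at this
  have h11 := congrFun (congrFun hZZ i1) i1
  rw [Matrix.mul_apply] at h11
  rw [Finset.sum_eq_zero (fun m _ => by rw [hcol m i1 hone, zero_mul])] at h11
  rw [Matrix.one_apply_eq] at h11
  exact zero_ne_one h11

end mainsec

end PVAux



/-- If `K` has algebraically closed field of constants and every linear differential system over
`K` has a fundamental matrix of solutions in `K`, then `K` is algebraically closed. -/
theorem algClosed_of_PV_closed {K : Type*} [Field K] [CharZero K] (δ : K → K)
    (hadd : ∀ a b : K, δ (a + b) = δ a + δ b)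
    (hmul : ∀ a b : K, δ (a * b) = a * δ b + b * δ a)
    (hCalgclosed : ∀ p : Polynomial K, 0 < p.degree → (∀ i, δ (p.coeff i) = 0) →
      ∃ x : K, δ x = 0 ∧ p.IsRoot x)
    (hPV : ∀ (n : ℕ) (A : Matrix (Fin n) (Fin n) K),
      ∃ Z Zinv : Matrix (Fin n) (Fin n) K, Z.map δ = A * Z ∧ Z * Zinv = 1 ∧ Zinv * Z = 1) :
    ∀ p : Polynomial K, 0 < p.degree → ∃ x : K, p.IsRoot x := by

  intro p hp
  have hp0 : p ≠ 0 := fun h => by simp [h] at hp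
  have hpu : ¬IsUnit p := Polynomial.not_isUnit_of_degree_pos p hp
  obtain ⟨q, hqirr, hqdvd⟩ := WfDvdMonoid.exists_irreducible_factor hpu hp0
  have h1 := PVAux.natDegree_eq_one δ hadd hmul hCalgclosed hPV q hqirr
  have hc1 : q.coeff 1 ≠ 0 := by
    have hl := Polynomial.leadingCoeff_ne_zero.mpr hqirr.ne_zero
    rwa [Polynomial.leadingCoeff, h1] at hl
  refine ⟨-(q.coeff 0) / q.coeff 1, ?_⟩
  have hqroot : q.IsRoot (-(q.coeff 0) / q.coeff 1) := by
    have hqe := Polynomial.eq_X_add_C_of_natDegree_le_one (le_of_eq h1)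
    set a := q.coeff 1 with ha
    set b := q.coeff 0 with hb
    rw [Polynomial.IsRoot.def, hqe]
    simp only [Polynomial.eval_add, Polynomial.eval_mul, Polynomial.eval_C, Polynomial.eval_X]
    field_simp
    ring
  exact hqroot.dvd hqdvd
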